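/- (Energy-Dissipation Principle.) Let E : ℝⁿ → ℝ be continuously differentiable, let R : ℝⁿ × ℝⁿ → [0,∞] be Borel measurable with v ↦ R(q,v) a dissipation potential for each q, and let R*(q,ξ) := sup_v (⟨ξ,v⟩ − R(q,v)). Let q : [0,T] → ℝⁿ be Lipschitz with a.e. derivative q̇, and assume t ↦ R(q(t), q̇(t)) and t ↦ R*(q(t), −∇E(q(t))) are Lebesgue measurable. Then the following are equivalent: (1) for almost every t ∈ [0,T], R(q(t), q̇(t)) + R*(q(t), −∇E(q(t))) = ⟨−∇E(q(t)), q̇(t)⟩; (2) E(q(T)) + ∫₀ᵀ [ R(q(t), q̇(t)) + R*(q(t), −∇E(q(t))) ] dt ≤ E(q(0)), where the integral is taken in [0,∞]. -/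

import Mathlib

open Filter MeasureTheory
open scoped ENNReal NNReal RealInnerProductSpace Topology

/-- The partial Fenchel conjugate `R*(q,ξ) = sup_v (⟨ξ,v⟩ - R(q,v))` of a
state-dependent dissipation potential, with values in `[0,∞]`. -/
noncomputable def dualDissipation {n : ℕ}
    (R : EuclideanSpace ℝ (Fin n) → EuclideanSpace ℝ (Fin n) → ℝ≥0∞)
    (q ξ : EuclideanSpace ℝ (Fin n)) : ℝ≥0∞ :=
  ⨆ v : EuclideanSpace ℝ (Fin n), ENNReal.ofReal ⟪ξ, v⟫ - R q v

section Aux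

lemma slope_seq_tendsto {f : ℝ → ℝ} {d t : ℝ} (hf : HasDerivAt f d t) :
    Tendsto (fun k : ℕ => (f (t + 1/(k+1)) - f t) / (1/(k+1))) atTop (𝓝 d) := by
  have h0 : Tendsto (fun k : ℕ => (1:ℝ)/(k+1)) atTop (𝓝 0) :=
    tendsto_one_div_add_atTop_nhds_zero_nat
  have h1 : Tendsto (fun k : ℕ => t + 1/(k+1 : ℝ)) atTop (𝓝[≠] t) := by
    apply tendsto_nhdsWithin_of_tendsto_nhds_of_eventually_within
    · simpa using tendsto_const_nhds.add h0
    · filter_upwards with k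
      simp only [Set.mem_compl_iff, Set.mem_singleton_iff]
      have h5 : (0:ℝ) < 1/(k+1) := by positivity
      intro h
      rw [add_eq_left] at h
      linarith
  have h2 := (hasDerivAt_iff_tendsto_slope.mp hf).comp h1
  convert h2 using 2 with k
  simp [slope_def_field, Function.comp]

lemma lipschitz_ftc {F : ℝ → ℝ} {L : ℝ≥0} (hF : LipschitzWith L F)
    {T : ℝ} (hT : 0 < T) {φ : ℝ → ℝ}
    (hφ : ∀ᵐ t ∂(volume.restrict (Set.Icc (0:ℝ) T)), HasDerivAt F (φ t) t) :
    IntegrableOn φ (Set.Icc 0 T) ∧ ∫ t in Set.Icc (0:ℝ) T, φ t = F T - F 0 := by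
  set μ := volume.restrict (Set.Icc (0:ℝ) T) with hμ
  set g : ℕ → ℝ → ℝ := fun k t => (F (t + 1/(k+1)) - F t) / (1/(k+1)) with hg
  have hFc : Continuous F := hF.continuous
  have hgmeas : ∀ k, AEStronglyMeasurable (g k) μ := fun k =>
    (((hFc.comp (continuous_id.add continuous_const)).sub hFc).div_const _).aestronglyMeasurable
  have hgbound : ∀ k t, |g k t| ≤ (L : ℝ) := by
    intro k t
    have hk : (0:ℝ) < 1/(k+1) := by positivity
    have := hF.dist_le_mul (t + 1/(k+1)) t
    rw [Real.dist_eq, Real.dist_eq] at this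
    simp only [add_sub_cancel_left, abs_of_pos hk] at this
    rw [hg, abs_div, abs_of_pos hk, div_le_iff₀ hk]
    simpa using this
  have hglim : ∀ᵐ t ∂μ, Tendsto (fun k => g k t) atTop (𝓝 (φ t)) := by
    filter_upwards [hφ] with t ht using slope_seq_tendsto ht
  have hbound_int : Integrable (fun _ => (L:ℝ)) μ := by
    rw [hμ]
    exact integrableOn_const (by simp)
  have hφmeas : AEStronglyMeasurable φ μ :=
    aestronglyMeasurable_of_tendsto_ae atTop hgmeas hglim
  have hφint : Integrable φ μ := by
    refine hbound_int.mono' hφmeas ?_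
    filter_upwards [hglim] with t ht
    have : Tendsto (fun k => |g k t|) atTop (𝓝 |φ t|) := ht.abs
    exact le_of_tendsto this (Eventually.of_forall fun k => hgbound k t)
  have hdom := tendsto_integral_of_dominated_convergence (fun _ => (L:ℝ)) hgmeas hbound_int
    (fun k => Eventually.of_forall fun t => (Real.norm_eq_abs _ ▸ hgbound k t)) hglim
  -- compute ∫ g k
  set G : ℝ → ℝ := fun u => ∫ x in (0:ℝ)..u, F x with hG
  have hFint : ∀ a b : ℝ, IntervalIntegrable F volume a b := fun a b =>
    hFc.intervalIntegrable a b
  have hIgk : ∀ k : ℕ, ∫ t, g k t ∂μ = ((G (T + 1/(k+1)) - G T) - (G (0 + 1/(k+1)) - G 0)) / (1/(k+1)) := by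
    intro k
    have h1 : ∫ t, g k t ∂μ = ∫ t in (0:ℝ)..T, g k t := by
      rw [hμ, MeasureTheory.integral_Icc_eq_integral_Ioc, intervalIntegral.integral_of_le hT.le]
    rw [h1, hg]
    rw [intervalIntegral.integral_div]
    congr 1
    have hi : Continuous fun x : ℝ => F (x + 1/(k+1)) := hFc.comp (continuous_id.add continuous_const)
    rw [intervalIntegral.integral_sub (hi.intervalIntegrable _ _) (hFint _ _)]
    have h2 : (∫ t in (0:ℝ)..T, F (t + 1/(k+1))) = ∫ x in (0 + 1/(k+1):ℝ)..(T + 1/(k+1)), F x :=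
      intervalIntegral.integral_comp_add_right (f := F) (1/(k+1))
    rw [h2]
    have h3 : ∀ a b : ℝ, (∫ x in a..b, F x) = G b - G a := by
      intro a b
      rw [hG]
      rw [← intervalIntegral.integral_interval_sub_left (hFint 0 b) (hFint 0 a)]
    rw [h3, h3]
    ring
  have hGd : ∀ u : ℝ, HasDerivAt G (F u) u := fun u =>
    intervalIntegral.integral_hasDerivAt_right (hFint 0 u)
      (hFc.stronglyMeasurableAtFilter _ _) hFc.continuousAt
  have hlim2 : Tendsto (fun k : ℕ => ∫ t, g k t ∂μ) atTop (𝓝 (F T - F 0)) := by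
    simp only [hIgk]
    have hT' := slope_seq_tendsto (hGd T)
    have h0' := slope_seq_tendsto (hGd 0)
    have := hT'.sub h0'
    convert this using 2 with k
    ring
  have : ∫ t, φ t ∂μ = F T - F 0 := tendsto_nhds_unique hdom hlim2
  exact ⟨hφint, this⟩

lemma fenchelYoung {n : ℕ} (R : EuclideanSpace ℝ (Fin n) → EuclideanSpace ℝ (Fin n) → ℝ≥0∞)
    (q ξ v : EuclideanSpace ℝ (Fin n)) :
    ENNReal.ofReal ⟪ξ, v⟫ ≤ R q v + dualDissipation R q ξ := by
  have h := le_iSup (fun v => ENNReal.ofReal ⟪ξ, v⟫ - R q v) v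
  rw [add_comm]
  exact tsub_le_iff_right.mp h

end Aux

/-- **Energy-Dissipation Principle.** For a `C¹` energy `E`, a Borel
measurable state-dependent dissipation potential `R`, and a Lipschitz curve
`q : [0,T] → ℝⁿ` with a.e. derivative `q'`, the pointwise a.e. energy-dissipation
balance `R(q,q̇) + R*(q,-∇E(q)) = ⟨-∇E(q), q̇⟩` is equivalent to the integrated
energy-dissipation inequality `E(q(T)) + ∫₀ᵀ [R + R*] dt ≤ E(q(0))`. -/
theorem statement2 {n : ℕ} (E : EuclideanSpace ℝ (Fin n) → ℝ) (hE : ContDiff ℝ 1 E)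
    (R : EuclideanSpace ℝ (Fin n) → EuclideanSpace ℝ (Fin n) → ℝ≥0∞)
    (hRmeas : Measurable (Function.uncurry R))
    (hRconv : ∀ q x y : EuclideanSpace ℝ (Fin n), ∀ t : ℝ, 0 ≤ t → t ≤ 1 →
      R q (t • x + (1 - t) • y) ≤ ENNReal.ofReal t * R q x + ENNReal.ofReal (1 - t) * R q y)
    (hRlsc : ∀ q, LowerSemicontinuous (R q)) (hR0 : ∀ q, R q 0 = 0)
    (T : ℝ) (hT : 0 < T) (q : ℝ → EuclideanSpace ℝ (Fin n)) (K : ℝ≥0)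
    (hq : LipschitzOnWith K q (Set.Icc 0 T))
    (q' : ℝ → EuclideanSpace ℝ (Fin n))
    (hq' : ∀ᵐ t ∂(volume.restrict (Set.Icc (0:ℝ) T)), HasDerivAt q (q' t) t)
    (hmeas1 : AEMeasurable (fun t => R (q t) (q' t)) (volume.restrict (Set.Icc (0:ℝ) T)))
    (hmeas2 : AEMeasurable (fun t => dualDissipation R (q t) (-gradient E (q t)))
      (volume.restrict (Set.Icc (0:ℝ) T))) :
    (∀ᵐ t ∂(volume.restrict (Set.Icc (0:ℝ) T)),
        (R (q t) (q' t) : EReal) + (dualDissipation R (q t) (-gradient E (q t)) : EReal) =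
          ((⟪-gradient E (q t), q' t⟫ : ℝ) : EReal)) ↔
      (E (q T) : EReal) +
          (↑(∫⁻ t in Set.Icc (0:ℝ) T,
              (R (q t) (q' t) + dualDissipation R (q t) (-gradient E (q t)))) : EReal) ≤
        (E (q 0) : EReal) := by
  classical
  set μ := volume.restrict (Set.Icc (0:ℝ) T) with hμdef
  -- time projection onto [0,T]
  set p : ℝ → ℝ := fun t => min (max t 0) T with hp
  have hpmem : ∀ t, p t ∈ Set.Icc (0:ℝ) T := fun t =>
    ⟨le_min (le_max_right t 0) hT.le, min_le_right _ _⟩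
  have hpeq : ∀ t ∈ Set.Icc (0:ℝ) T, p t = t := by
    intro t ht
    rw [hp]
    simp only []
    rw [max_eq_left ht.1, min_eq_left ht.2]
  have hplip : LipschitzWith 1 p := (LipschitzWith.id.max_const 0).min_const T
  set qe : ℝ → EuclideanSpace ℝ (Fin n) := fun t => q (p t) with hqe
  have hqeq : ∀ t ∈ Set.Icc (0:ℝ) T, qe t = q t := fun t ht => by
    rw [hqe]; simp only []; rw [hpeq t ht]
  have hqelip : LipschitzWith (K * 1) qe := by
    rw [← lipschitzOnWith_univ]
    exact hq.comp (hplip.lipschitzOnWith (s := Set.univ)) (fun t _ => hpmem t)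
  -- a bounded ball containing the range of qe
  obtain ⟨M, hM⟩ : ∃ M, Set.range qe ⊆ Metric.closedBall 0 M := by
    have hC : IsCompact (q '' Set.Icc 0 T) := isCompact_Icc.image_of_continuousOn hq.continuousOn
    obtain ⟨M, hM⟩ := hC.isBounded.subset_closedBall 0
    exact ⟨M, by rintro _ ⟨t, rfl⟩; exact hM ⟨p t, hpmem t, rfl⟩⟩
  set s := Metric.closedBall (0 : EuclideanSpace ℝ (Fin n)) M with hs
  have hsc : IsCompact s := isCompact_closedBall _ _
  have hEdiff : Differentiable ℝ E := hE.differentiable one_ne_zero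
  obtain ⟨c, hc⟩ := hsc.exists_bound_of_continuousOn ((hE.continuous_fderiv one_ne_zero).continuousOn)
  have hElip : LipschitzOnWith c.toNNReal E s := by
    apply (convex_closedBall _ _).lipschitzOnWith_of_nnnorm_hasFDerivWithin_le
      (f' := fun x => fderiv ℝ E x)
      (fun x _ => (hEdiff x).hasFDerivAt.hasFDerivWithinAt)
    intro x hx
    rw [← NNReal.coe_le_coe, coe_nnnorm, Real.coe_toNNReal']
    exact (hc x hx).trans (le_max_left _ _)
  set F : ℝ → ℝ := fun t => E (qe t) with hF
  have hFlip : LipschitzWith (c.toNNReal * (K * 1)) F := by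
    rw [← lipschitzOnWith_univ]
    exact hElip.comp (hqelip.lipschitzOnWith (s := Set.univ)) (fun t _ => hM ⟨t, rfl⟩)
  have hgrad : ∀ x v : EuclideanSpace ℝ (Fin n), ⟪gradient E x, v⟫ = fderiv ℝ E x v :=
    fun x v => InnerProductSpace.toDual_symm_apply
  set φ : ℝ → ℝ := fun t => ⟪gradient E (q t), q' t⟫ with hφdef
  have hae_Ioo : ∀ᵐ t ∂μ, t ∈ Set.Ioo (0:ℝ) T := by
    have h1 : ∀ᵐ t ∂μ, t ∈ Set.Icc (0:ℝ) T := ae_restrict_mem measurableSet_Icc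
    have h2 : μ ({0, T} : Set ℝ) = 0 := by
      rw [hμdef]
      refine le_antisymm (le_trans (Measure.restrict_apply_le _ _) ?_) (by simp)
      exact le_of_eq (Set.Finite.measure_zero ((Set.finite_singleton T).insert 0) _)
    have h3 : ∀ᵐ t ∂μ, t ∉ ({0, T} : Set ℝ) := measure_eq_zero_iff_ae_notMem.mp h2
    filter_upwards [h1, h3] with t ht hn
    simp only [Set.mem_insert_iff, Set.mem_singleton_iff, not_or] at hn
    exact ⟨ht.1.lt_of_ne (Ne.symm hn.1), ht.2.lt_of_ne hn.2⟩
  have hφae : ∀ᵐ t ∂μ, HasDerivAt F (φ t) t := by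
    filter_upwards [hq', hae_Ioo] with t ht hIoo
    have hnb : Set.Icc (0:ℝ) T ∈ 𝓝 t := Icc_mem_nhds hIoo.1 hIoo.2
    have heq : qe =ᶠ[𝓝 t] q := eventually_of_mem hnb (fun u hu => hqeq u hu)
    have hqe' : HasDerivAt qe (q' t) t := ht.congr_of_eventuallyEq heq
    have hD := ((hEdiff (qe t)).hasFDerivAt).comp_hasDerivAt t hqe'
    have hval : fderiv ℝ E (qe t) (q' t) = φ t := by
      rw [hφdef]
      simp only []
      rw [hgrad, hqeq t (Set.mem_Icc.mpr ⟨hIoo.1.le, hIoo.2.le⟩)]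
    rw [hval] at hD
    exact hD
  obtain ⟨hφint, hφval⟩ := lipschitz_ftc hFlip hT hφae
  have hFT : F T = E (q T) := by
    rw [hF]; simp only []; rw [hqeq T (Set.mem_Icc.mpr ⟨hT.le, le_rfl⟩)]
  have hF0 : F 0 = E (q 0) := by
    rw [hF]; simp only []; rw [hqeq 0 (Set.mem_Icc.mpr ⟨le_rfl, hT.le⟩)]
  set f : ℝ → ℝ := fun t => ⟪-gradient E (q t), q' t⟫ with hfdef
  have hfneg : f = fun t => -φ t := by
    funext t; rw [hfdef, hφdef]; simp only []; rw [inner_neg_left]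
  have hfint : Integrable f μ := by rw [hfneg]; exact hφint.neg
  have hfval : ∫ t, f t ∂μ = E (q 0) - E (q T) := by
    rw [hfneg, integral_neg]
    have : ∫ t, φ t ∂μ = F T - F 0 := hφval
    rw [this, hFT, hF0]; ring
  set g : ℝ → ℝ≥0∞ := fun t => R (q t) (q' t) + dualDissipation R (q t) (-gradient E (q t))
    with hgdef
  have hgmeas : AEMeasurable g μ := hmeas1.add hmeas2
  have hFY : ∀ t, ENNReal.ofReal (f t) ≤ g t := fun t => fenchelYoung R _ _ _
  constructor
  · intro h
    have h1 : ∀ᵐ t ∂μ, g t = ENNReal.ofReal (f t) ∧ 0 ≤ f t := by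
      filter_upwards [h] with t ht
      have hsum : ((g t : ℝ≥0∞) : EReal) = ((f t : ℝ) : EReal) := by
        rw [hgdef]
        simp only []
        rw [EReal.coe_ennreal_add]
        exact ht
      have hnn : (0:ℝ) ≤ f t := by
        have h0 := EReal.coe_ennreal_nonneg (g t)
        rw [hsum] at h0
        exact EReal.coe_nonneg.mp h0
      refine ⟨EReal.coe_ennreal_injective ?_, hnn⟩
      rw [hsum, EReal.coe_ennreal_ofReal, max_eq_left hnn]
    have h2 : (∫⁻ t, g t ∂μ) = ENNReal.ofReal (E (q 0) - E (q T)) := by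
      rw [lintegral_congr_ae (h1.mono fun t ht => ht.1)]
      rw [← ofReal_integral_eq_lintegral_ofReal hfint (h1.mono fun t ht => ht.2)]
      rw [hfval]
    have hcnn : 0 ≤ E (q 0) - E (q T) := by
      rw [← hfval]
      exact integral_nonneg_of_ae (h1.mono fun t ht => ht.2)
    rw [show (∫⁻ t in Set.Icc (0:ℝ) T, g t) = ∫⁻ t, g t ∂μ from rfl, h2,
      EReal.coe_ennreal_ofReal, max_eq_left hcnn, ← EReal.coe_add, EReal.coe_le_coe_iff]
    linarith
  · intro h
    set I := ∫⁻ t, g t ∂μ with hIdef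
    have hgoal : (E (q T) : EReal) + (I : EReal) ≤ (E (q 0) : EReal) := h
    have hItop : I ≠ ⊤ := by
      intro htop
      rw [htop, EReal.coe_ennreal_top, EReal.add_top_of_ne_bot (EReal.coe_ne_bot _)] at hgoal
      exact (EReal.coe_lt_top _).not_ge hgoal
    have hIr : I.toReal ≤ E (q 0) - E (q T) := by
      have hIeq : (I : EReal) = ((I.toReal : ℝ) : EReal) := by
        conv_lhs => rw [← ENNReal.ofReal_toReal hItop]
        rw [EReal.coe_ennreal_ofReal, max_eq_left ENNReal.toReal_nonneg]
      rw [hIeq, ← EReal.coe_add, EReal.coe_le_coe_iff] at hgoal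
      linarith
    have haelt : ∀ᵐ t ∂μ, g t < ⊤ := ae_lt_top' hgmeas hItop
    set G : ℝ → ℝ := fun t => (g t).toReal with hGdef
    have hGint : Integrable G μ := integrable_toReal_of_lintegral_ne_top hgmeas hItop
    have hGval : ∫ t, G t ∂μ = I.toReal := integral_toReal hgmeas haelt
    have hfleG : ∀ᵐ t ∂μ, f t ≤ G t := by
      filter_upwards [haelt] with t ht
      rcases le_or_gt (f t) 0 with h0 | h0
      · exact h0.trans ENNReal.toReal_nonneg
      · have h4 := ENNReal.toReal_mono ht.ne (hFY t)
        rwa [ENNReal.toReal_ofReal h0.le] at h4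
    have hsub1 : ∫ t, (G t - f t) ∂μ ≤ 0 := by
      rw [integral_sub hGint hfint, hGval, hfval]
      linarith
    have hsub2 : (0:ℝ) ≤ ∫ t, (G t - f t) ∂μ :=
      integral_nonneg_of_ae (hfleG.mono fun t ht => sub_nonneg.mpr ht)
    have hzero : (fun t => G t - f t) =ᵐ[μ] 0 :=
      (integral_eq_zero_iff_of_nonneg_ae (hfleG.mono fun t ht => sub_nonneg.mpr ht)
        (hGint.sub hfint)).mp (le_antisymm hsub1 hsub2)
    filter_upwards [haelt, hzero] with t hlt hz
    have hGf : G t = f t := by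
      have : G t - f t = 0 := hz
      linarith
    have hfnn : 0 ≤ f t := hGf ▸ ENNReal.toReal_nonneg
    have hgt : g t = ENNReal.ofReal (f t) := by
      rw [← hGf, hGdef]
      exact (ENNReal.ofReal_toReal hlt.ne).symm
    have : ((g t : ℝ≥0∞) : EReal) = ((f t : ℝ) : EReal) := by
      rw [hgt, EReal.coe_ennreal_ofReal, max_eq_left hfnn]
    rw [hgdef] at this
    simp only [] at this
    rw [EReal.coe_ennreal_add] at this
    exact this
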